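/- arXiv:1208.5029 — 3 statements merged into one kernel-verified Lean document; each statement's English description precedes it below -/
import Mathlib

section
/- Let I : ℝ^N → ℝ be continuous, grow at least quadratically (there exist c > 0, R such that I(x) ≥ c‖x‖² for ‖x‖ ≥ R), and attain its minimum over a measurable set A at x* lying in the interior of A. Then lim_{ε→0} ε² · log ∫_A (2π ε² σ² Δt)^{-N/2} · exp(-I(x)/ε²) dx = -I(x*). -/
open MeasureTheory Filter Real

/-- Laplace's method for the rescaled Gaussian-type integral: if `I` is continuous,
nonnegative, grows at least quadratically, and attains its minimum over the measurable
set `A` at `x*` lying in the interior of `A`, then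
`ε² log ∫_A (2πε²σ²Δt)^{-N/2} exp(-I(x)/ε²) dx → -I(x*)` as `ε → 0⁺`. -/
theorem laplace_method
    (N : ℕ) (hN : 0 < N) (σ Δt : ℝ) (hσ : 0 < σ) (hΔt : 0 < Δt)
    (I : EuclideanSpace ℝ (Fin N) → ℝ) (hI : Continuous I)
    (hInonneg : ∀ x, 0 ≤ I x)
    (hgrowth : ∃ c > (0:ℝ), ∃ R : ℝ, ∀ x, R ≤ ‖x‖ → c * ‖x‖ ^ 2 ≤ I x)
    (A : Set (EuclideanSpace ℝ (Fin N))) (hA : MeasurableSet A)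
    (xstar : EuclideanSpace ℝ (Fin N)) (hxstar : xstar ∈ interior A)
    (hmin : ∀ x ∈ A, I xstar ≤ I x) :
    Tendsto
      (fun ε : ℝ =>
        ε ^ 2 *
          Real.log (∫ x in A,
            (2 * π * ε ^ 2 * σ ^ 2 * Δt) ^ (-(N : ℝ) / 2) * Real.exp (-(I x) / ε ^ 2)))
      (nhdsWithin 0 (Set.Ioi 0)) (nhds (-(I xstar))) := by
  obtain ⟨c, hc, R, hR⟩ := hgrowth
  set m := I xstar with hmdef
  -- Gaussian integrability on Euclidean space
  have hgauss : ∀ b : ℝ, 0 < b →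
      Integrable (fun x : EuclideanSpace ℝ (Fin N) => Real.exp (-b * ‖x‖ ^ 2)) := by
    intro b hb
    have h1 := (GaussianFourier.integrable_cexp_neg_mul_sq_norm_add
        (V := EuclideanSpace ℝ (Fin N)) (b := (b : ℂ)) (by simpa using hb) 0 0).re
    refine h1.congr (Filter.Eventually.of_forall fun x => ?_)
    have : (-(b:ℂ) * (‖x‖:ℂ)^2 + 0 * (inner ℝ (0 : EuclideanSpace ℝ (Fin N)) x : ℝ))
        = ((-b * ‖x‖^2 : ℝ) : ℂ) := by push_cast; ring
    simp only [this]
    exact Complex.exp_ofReal_re _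
  -- integrability of exp(-(t * I x)) for t > 0
  have hInt : ∀ t : ℝ, 0 < t →
      Integrable (fun x : EuclideanSpace ℝ (Fin N) => Real.exp (-(t * I x))) := by
    intro t ht
    have hmeas : AEStronglyMeasurable
        (fun x : EuclideanSpace ℝ (Fin N) => Real.exp (-(t * I x))) volume :=
      (Real.continuous_exp.comp ((continuous_const.mul hI).neg)).aestronglyMeasurable
    have hbnd : Integrable (fun x : EuclideanSpace ℝ (Fin N) =>
        Real.exp (t * c * R ^ 2) * Real.exp (-(t * c) * ‖x‖ ^ 2)) :=
      (hgauss (t * c) (mul_pos ht hc)).const_mul _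
    refine hbnd.mono' hmeas (Filter.Eventually.of_forall fun x => ?_)
    rw [Real.norm_eq_abs, abs_of_nonneg (Real.exp_nonneg _), ← Real.exp_add]
    apply Real.exp_le_exp.2
    rcases le_or_gt R ‖x‖ with h | h
    · have h2 := hR x h
      nlinarith [mul_nonneg (mul_nonneg ht.le hc.le) (sq_nonneg R)]
    · have hx : 0 ≤ ‖x‖ := norm_nonneg x
      have hxx : ‖x‖ ^ 2 ≤ R ^ 2 := by nlinarith
      nlinarith [mul_nonneg ht.le (hInonneg x),
        mul_nonneg (mul_nonneg ht.le hc.le) (sub_nonneg.2 hxx)]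
  -- the main integrand is integrable over A for every ε > 0
  have hgInt : ∀ ε : ℝ, 0 < ε →
      IntegrableOn (fun x : EuclideanSpace ℝ (Fin N) => Real.exp (-(I x) / ε ^ 2)) A := by
    intro ε hε
    have h1 := hInt (1 / ε ^ 2) (by positivity)
    have h2 : (fun x : EuclideanSpace ℝ (Fin N) => Real.exp (-(I x) / ε ^ 2))
        = fun x => Real.exp (-(1 / ε ^ 2 * I x)) := by
      funext x; congr 1; ring
    rw [h2]; exact h1.integrableOn
  set g : ℝ → ℝ := fun ε => ∫ x in A, Real.exp (-(I x) / ε ^ 2) with hgdef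
  -- balls around xstar inside A where I is close to the min
  have hball : ∀ δ : ℝ, 0 < δ → ∃ r > (0:ℝ), Metric.ball xstar r ⊆ A ∧
      ∀ x ∈ Metric.ball xstar r, I x ≤ m + δ := by
    intro δ hδ
    have hopen : IsOpen (interior A ∩ I ⁻¹' Set.Iio (m + δ)) :=
      isOpen_interior.inter (isOpen_Iio.preimage hI)
    have hmem : xstar ∈ interior A ∩ I ⁻¹' Set.Iio (m + δ) :=
      ⟨hxstar, by simp only [Set.mem_preimage, Set.mem_Iio]; linarith⟩
    obtain ⟨r, hr, hsub⟩ := Metric.isOpen_iff.1 hopen xstar hmem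
    exact ⟨r, hr, fun x hx => interior_subset (hsub hx).1,
      fun x hx => le_of_lt (hsub hx).2⟩
  -- lower bound for g
  have hlow : ∀ δ : ℝ, 0 < δ → ∃ v > (0:ℝ), ∀ ε : ℝ, 0 < ε →
      v * Real.exp (-(m + δ) / ε ^ 2) ≤ g ε := by
    intro δ hδ
    obtain ⟨r, hr, hsub, hbd⟩ := hball δ hδ
    refine ⟨(volume (Metric.ball xstar r)).toReal,
      ENNReal.toReal_pos (Metric.measure_ball_pos volume xstar hr).ne' measure_ball_lt_top.ne,
      fun ε hε => ?_⟩
    have hs : (0:ℝ) < ε ^ 2 := by positivity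
    have step1 : (volume (Metric.ball xstar r)).toReal * Real.exp (-(m + δ) / ε ^ 2)
        = ∫ _ in Metric.ball xstar r, Real.exp (-(m + δ) / ε ^ 2) := by
      rw [setIntegral_const, smul_eq_mul]
      rfl
    rw [step1]
    have step2 : (∫ _ in Metric.ball xstar r, Real.exp (-(m + δ) / ε ^ 2))
        ≤ ∫ x in Metric.ball xstar r, Real.exp (-(I x) / ε ^ 2) := by
      apply setIntegral_mono_on
      · exact integrableOn_const measure_ball_lt_top.ne
      · exact (hgInt ε hε).mono_set hsub
      · exact measurableSet_ball
      · intro x hx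
        apply Real.exp_le_exp.2
        have : I x ≤ m + δ := hbd x hx
        have hIx : I x ≤ m + δ := hbd x hx
        gcongr
    refine step2.trans ?_
    exact setIntegral_mono_set (hgInt ε hε)
      (Filter.Eventually.of_forall fun x => Real.exp_nonneg _)
      (HasSubset.Subset.eventuallyLE hsub)
  -- positivity of g
  have hpos : ∀ ε : ℝ, 0 < ε → 0 < g ε := by
    intro ε hε
    obtain ⟨v, hv, hlv⟩ := hlow 1 one_pos
    exact lt_of_lt_of_le (by positivity) (hlv ε hε)
  -- upper bound for g
  set K : ℝ := ∫ x in A, Real.exp (m - I x) with hKdef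
  have hKint : IntegrableOn (fun x : EuclideanSpace ℝ (Fin N) =>
      Real.exp (m - I x)) A := by
    have h1 := hInt 1 one_pos
    have h2 : (fun x : EuclideanSpace ℝ (Fin N) => Real.exp (m - I x))
        = fun x => Real.exp m * Real.exp (-(1 * I x)) := by
      funext x; rw [← Real.exp_add]; congr 1; ring
    rw [h2]; exact (h1.const_mul _).integrableOn
  have hup : ∀ ε : ℝ, 0 < ε → ε ≤ 1 → g ε ≤ Real.exp (-m / ε ^ 2) * K := by
    intro ε hε hε1
    have hs : (0:ℝ) < ε ^ 2 := by positivity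
    have hs1 : ε ^ 2 ≤ 1 := by nlinarith
    have step : g ε ≤ ∫ x in A, Real.exp (-m / ε ^ 2) * Real.exp (m - I x) := by
      apply setIntegral_mono_on (hgInt ε hε) (hKint.const_mul _) hA
      intro x hx
      rw [← Real.exp_add]
      apply Real.exp_le_exp.2
      have hu : m ≤ I x := hmin x hx
      rw [div_le_iff₀ hs]
      have hd : -m / ε ^ 2 * ε ^ 2 = -m := div_mul_cancel₀ _ hs.ne'
      nlinarith [mul_nonneg (sub_nonneg.2 hu) (sub_nonneg.2 hs1)]
    refine step.trans_eq ?_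
    rw [integral_const_mul]
  have hKpos : 0 < K := by
    have h1 := hpos 1 one_pos
    have h2 := hup 1 one_pos le_rfl
    nlinarith [Real.exp_pos (-m / (1:ℝ) ^ 2)]
  -- helper: ε² * constant → 0
  have tendsq : ∀ b : ℝ, Tendsto (fun ε : ℝ => ε ^ 2 * b) (nhdsWithin 0 (Set.Ioi 0)) (nhds 0) := by
    intro b
    have h1 : Tendsto (fun ε : ℝ => ε ^ 2 * b) (nhds 0) (nhds ((0:ℝ) ^ 2 * b)) :=
      (((continuous_pow 2).tendsto (0:ℝ)).mul_const b)
    simpa using h1.mono_left nhdsWithin_le_nhds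
  -- limit of ε² log (g ε)
  have h2lim : Tendsto (fun ε : ℝ => ε ^ 2 * Real.log (g ε))
      (nhdsWithin 0 (Set.Ioi 0)) (nhds (-m)) := by
    rw [Metric.tendsto_nhds]
    intro η hη
    obtain ⟨v, hv, hlv⟩ := hlow (η / 2) (by positivity)
    have hevK := Metric.tendsto_nhds.1 (tendsq (Real.log K)) (η / 2) (by positivity)
    have hevv := Metric.tendsto_nhds.1 (tendsq (Real.log v)) (η / 2) (by positivity)
    have hev2 : ∀ᶠ ε : ℝ in nhdsWithin 0 (Set.Ioi 0), ε ≤ 1 :=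
      ((eventually_lt_nhds one_pos).mono fun _ h => h.le).filter_mono nhdsWithin_le_nhds
    filter_upwards [hevK, hevv, hev2, self_mem_nhdsWithin] with ε hK' hv' hε1 hεmem
    have hε : (0:ℝ) < ε := hεmem
    have hs : (0:ℝ) < ε ^ 2 := by positivity
    rw [Real.dist_eq, sub_zero, abs_lt] at hK' hv'
    rw [Real.dist_eq, abs_lt]
    have hgpos := hpos ε hε
    constructor
    · -- lower bound
      have hl := hlv ε hε
      have hlog : Real.log (v * Real.exp (-(m + η / 2) / ε ^ 2)) ≤ Real.log (g ε) :=
        Real.log_le_log (by positivity) hl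
      rw [Real.log_mul hv.ne' (Real.exp_pos _).ne', Real.log_exp] at hlog
      have h3 : ε ^ 2 * (Real.log v + -(m + η / 2) / ε ^ 2) ≤ ε ^ 2 * Real.log (g ε) :=
        mul_le_mul_of_nonneg_left hlog (sq_nonneg ε)
      have h4 : ε ^ 2 * (-(m + η / 2) / ε ^ 2) = -(m + η / 2) := by
        field_simp
      rw [mul_add, h4] at h3
      linarith [hv'.1]
    · -- upper bound
      have hu := hup ε hε hε1
      have hlog : Real.log (g ε) ≤ Real.log (Real.exp (-m / ε ^ 2) * K) :=
        Real.log_le_log hgpos hu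
      rw [Real.log_mul (Real.exp_pos _).ne' hKpos.ne', Real.log_exp] at hlog
      have h3 : ε ^ 2 * Real.log (g ε) ≤ ε ^ 2 * (-m / ε ^ 2 + Real.log K) :=
        mul_le_mul_of_nonneg_left hlog (sq_nonneg ε)
      have h4 : ε ^ 2 * (-m / ε ^ 2) = -m := by field_simp
      rw [mul_add, h4] at h3
      linarith [hK'.2]
  -- limit of the prefactor term
  have h1lim : Tendsto (fun ε : ℝ =>
      ε ^ 2 * Real.log ((2 * π * ε ^ 2 * σ ^ 2 * Δt) ^ (-(N : ℝ) / 2)))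
      (nhdsWithin 0 (Set.Ioi 0)) (nhds 0) := by
    have heq : (fun ε : ℝ =>
        ε ^ 2 * Real.log ((2 * π * ε ^ 2 * σ ^ 2 * Δt) ^ (-(N : ℝ) / 2)))
        =ᶠ[nhdsWithin 0 (Set.Ioi 0)] fun ε =>
          (-(N : ℝ) / 2) * (ε ^ 2 * Real.log (2 * π * σ ^ 2 * Δt)
            + 2 * (Real.log ε * ε ^ (2:ℝ))) := by
      filter_upwards [self_mem_nhdsWithin] with ε hεmem
      have hε : (0:ℝ) < ε := hεmem
      have hbase : (0:ℝ) < 2 * π * ε ^ 2 * σ ^ 2 * Δt := by positivity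
      rw [Real.log_rpow hbase]
      have hsplit : 2 * π * ε ^ 2 * σ ^ 2 * Δt = (2 * π * σ ^ 2 * Δt) * ε ^ 2 := by ring
      rw [hsplit, Real.log_mul (by positivity) (by positivity), Real.log_pow]
      have hrp : ε ^ (2:ℝ) = ε ^ 2 := by
        rw [show (2:ℝ) = ((2:ℕ):ℝ) by norm_num, Real.rpow_natCast]
      rw [hrp]
      push_cast
      ring
    have hrhs : Tendsto (fun ε : ℝ =>
        (-(N : ℝ) / 2) * (ε ^ 2 * Real.log (2 * π * σ ^ 2 * Δt)
          + 2 * (Real.log ε * ε ^ (2:ℝ))))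
        (nhdsWithin 0 (Set.Ioi 0)) (nhds ((-(N : ℝ) / 2) * (0 + 2 * 0))) := by
      exact ((tendsq (Real.log (2 * π * σ ^ 2 * Δt))).add
        ((tendsto_log_mul_rpow_nhdsGT_zero two_pos).const_mul 2)).const_mul _
    simpa using hrhs.congr' heq.symm
  -- assemble
  have heqmain : (fun ε : ℝ =>
      ε ^ 2 * Real.log (∫ x in A,
        (2 * π * ε ^ 2 * σ ^ 2 * Δt) ^ (-(N : ℝ) / 2) * Real.exp (-(I x) / ε ^ 2)))
      =ᶠ[nhdsWithin 0 (Set.Ioi 0)] fun ε =>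
        ε ^ 2 * Real.log ((2 * π * ε ^ 2 * σ ^ 2 * Δt) ^ (-(N : ℝ) / 2))
          + ε ^ 2 * Real.log (g ε) := by
    filter_upwards [self_mem_nhdsWithin] with ε hεmem
    have hε : (0:ℝ) < ε := hεmem
    have hbase : (0:ℝ) < 2 * π * ε ^ 2 * σ ^ 2 * Δt := by positivity
    have hCpos : (0:ℝ) < (2 * π * ε ^ 2 * σ ^ 2 * Δt) ^ (-(N : ℝ) / 2) :=
      Real.rpow_pos_of_pos hbase _
    rw [integral_const_mul, Real.log_mul hCpos.ne' (hpos ε hε).ne', mul_add]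
  have := h1lim.add h2lim
  rw [zero_add] at this
  exact this.congr' heqmain.symm
end

section
/- For a continuous set A ⊆ ℝ^N, if I is continuous, grows at least quadratically, and x* ∈ interior(A) minimizes I over A, then liminf_{ε→0} ε² · log ∫_A (2π ε² σ² Δt)^{-N/2} exp(-I(x)/ε²) dx ≥ -I(x*) (lower bound half of Laplace's method). -/
open MeasureTheory Filter Real Topology

/-- Real Gaussian integrability on Euclidean space. -/
lemma gauss_integrable (N : ℕ) {b : ℝ} (hb : 0 < b) :
    Integrable (fun v : EuclideanSpace ℝ (Fin N) => Real.exp (-b * ‖v‖ ^ 2)) := by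
  have h := (GaussianFourier.integrable_cexp_neg_mul_sq_norm_add (V := EuclideanSpace ℝ (Fin N))
    (b := (b : ℂ)) (by simpa using hb) 0 0).norm
  refine h.congr (Filter.Eventually.of_forall fun v => ?_)
  simp only [Complex.norm_exp, Complex.add_re, Complex.neg_re,
    Complex.mul_re, Complex.ofReal_re, Complex.ofReal_im, Complex.zero_re, Complex.zero_im, ← Complex.ofReal_pow]
  push_cast
  norm_num

set_option maxHeartbeats 1000000 in
/-- Lower bound half of Laplace's method: under the same hypotheses,
`liminf_{ε→0⁺} ε² log ∫_A (2πε²σ²Δt)^{-N/2} exp(-I(x)/ε²) dx ≥ -I(x*)`. -/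
theorem laplace_lower_bound
    (N : ℕ) (hN : 0 < N) (σ Δt : ℝ) (hσ : 0 < σ) (hΔt : 0 < Δt)
    (I : EuclideanSpace ℝ (Fin N) → ℝ) (hI : Continuous I)
    (hInonneg : ∀ x, 0 ≤ I x)
    (hgrowth : ∃ c > (0:ℝ), ∃ R : ℝ, ∀ x, R ≤ ‖x‖ → c * ‖x‖ ^ 2 ≤ I x)
    (A : Set (EuclideanSpace ℝ (Fin N))) (hA : MeasurableSet A)
    (xstar : EuclideanSpace ℝ (Fin N)) (hxstar : xstar ∈ interior A)
    (hmin : ∀ x ∈ A, I xstar ≤ I x) :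
    -(I xstar) ≤
      Filter.liminf
        (fun ε : ℝ =>
          ε ^ 2 *
            Real.log (∫ x in A,
              (2 * π * ε ^ 2 * σ ^ 2 * Δt) ^ (-(N : ℝ) / 2) * Real.exp (-(I x) / ε ^ 2)))
        (nhdsWithin 0 (Set.Ioi 0)) := by
  obtain ⟨c, hc, R, hR⟩ := hgrowth
  set R' : ℝ := max R 0 with hR'def
  set f : ℝ → ℝ := fun ε =>
      ε ^ 2 *
        Real.log (∫ x in A,
          (2 * π * ε ^ 2 * σ ^ 2 * Δt) ^ (-(N : ℝ) / 2) * Real.exp (-(I x) / ε ^ 2)) with hfdef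
  refine le_of_forall_pos_le_add fun δ hδ => ?_
  -- find a small ball around xstar inside A on which I ≤ I xstar + δ
  have hUopen : IsOpen (interior A ∩ I ⁻¹' Set.Iio (I xstar + δ)) :=
    isOpen_interior.inter (isOpen_Iio.preimage hI)
  have hxU : xstar ∈ interior A ∩ I ⁻¹' Set.Iio (I xstar + δ) :=
    ⟨hxstar, by simp [Set.mem_preimage]; linarith⟩
  obtain ⟨r, hr, hball⟩ := Metric.isOpen_iff.mp hUopen xstar hxU
  set B := Metric.ball xstar r with hBdef
  have hBA : B ⊆ A := fun x hx => interior_subset (hball hx).1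
  have hBI : ∀ x ∈ B, I x ≤ I xstar + δ := fun x hx => le_of_lt (hball hx).2
  have hvBpos : 0 < (volume B).toReal :=
    ENNReal.toReal_pos (Metric.measure_ball_pos volume xstar hr).ne'
      measure_ball_lt_top.ne
  set vB : ℝ := (volume B).toReal with hvBdef
  -- the comparison function g
  set g : ℝ → ℝ := fun ε =>
      ε ^ 2 * Real.log vB +
      ε ^ 2 * ((-(N : ℝ) / 2) * Real.log (2 * π * ε ^ 2 * σ ^ 2 * Δt)) -
      (I xstar + δ) with hgdef
  -- pointwise bound g ε ≤ f ε for ε > 0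
  have hle : ∀ᶠ ε in nhdsWithin 0 (Set.Ioi 0), g ε ≤ f ε := by
    filter_upwards [self_mem_nhdsWithin] with ε (hε : 0 < ε)
    have hε2 : 0 < ε ^ 2 := by positivity
    set C : ℝ := (2 * π * ε ^ 2 * σ ^ 2 * Δt) ^ (-(N : ℝ) / 2) with hCdef
    have hbase : 0 < 2 * π * ε ^ 2 * σ ^ 2 * Δt := by positivity
    have hC : 0 < C := Real.rpow_pos_of_pos hbase _
    -- integrability of the integrand on all of space
    have hint : Integrable (fun x : EuclideanSpace ℝ (Fin N) =>
        C * Real.exp (-(I x) / ε ^ 2)) := by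
      have hg : Integrable (fun x : EuclideanSpace ℝ (Fin N) =>
          (C * Real.exp (c * R' ^ 2 / ε ^ 2)) * Real.exp (-(c / ε ^ 2) * ‖x‖ ^ 2)) :=
        (gauss_integrable N (by positivity)).const_mul _
      refine hg.mono ?_ (Filter.Eventually.of_forall fun x => ?_)
      · exact (continuous_const.mul
          ((hI.neg.div_const _).rexp)).aestronglyMeasurable
      · have hkey : -(I x) ≤ c * R' ^ 2 - c * ‖x‖ ^ 2 := by
          rcases le_or_gt R' ‖x‖ with h | h
          · have := hR x (le_trans (le_max_left _ _) h)
            nlinarith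
          · have h0 : 0 ≤ R' := le_max_right _ _
            have hm := mul_self_le_mul_self (norm_nonneg x) h.le
            have := hInonneg x
            nlinarith
        rw [Real.norm_eq_abs, Real.norm_eq_abs, abs_of_pos (by positivity),
          abs_of_pos (by positivity), mul_assoc, ← Real.exp_add]
        refine mul_le_mul_of_nonneg_left (Real.exp_le_exp.2 ?_) hC.le
        have heq : c * R' ^ 2 / ε ^ 2 + -(c / ε ^ 2) * ‖x‖ ^ 2
            = (c * R' ^ 2 - c * ‖x‖ ^ 2) / ε ^ 2 := by ring
        rw [heq]
        exact (div_le_div_iff_of_pos_right hε2).2 hkey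
    -- lower bound of the integral by the ball integral
    have h1 : ∫ x in B, C * Real.exp (-(I x) / ε ^ 2)
        ≤ ∫ x in A, C * Real.exp (-(I x) / ε ^ 2) := by
      refine setIntegral_mono_set hint.integrableOn
        (Filter.Eventually.of_forall fun x => by positivity) ?_
      exact HasSubset.Subset.eventuallyLE hBA
    have h2 : vB * (C * Real.exp (-(I xstar + δ) / ε ^ 2))
        ≤ ∫ x in B, C * Real.exp (-(I x) / ε ^ 2) := by
      have hmono : ∫ _x in B, (C * Real.exp (-(I xstar + δ) / ε ^ 2))
          ≤ ∫ x in B, C * Real.exp (-(I x) / ε ^ 2) := by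
        refine setIntegral_mono_on
          (integrableOn_const measure_ball_lt_top.ne)
          hint.integrableOn measurableSet_ball (fun x hx => ?_)
        refine mul_le_mul_of_nonneg_left (Real.exp_le_exp.2 ?_) hC.le
        exact (div_le_div_iff_of_pos_right hε2).2 (neg_le_neg (hBI x hx))
      calc vB * (C * Real.exp (-(I xstar + δ) / ε ^ 2))
          = ∫ _x in B, (C * Real.exp (-(I xstar + δ) / ε ^ 2)) := by
            rw [setIntegral_const, smul_eq_mul]; rfl
        _ ≤ _ := hmono
    have hposlb : 0 < vB * (C * Real.exp (-(I xstar + δ) / ε ^ 2)) := by positivity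
    have hlog : Real.log (vB * (C * Real.exp (-(I xstar + δ) / ε ^ 2)))
        ≤ Real.log (∫ x in A, C * Real.exp (-(I x) / ε ^ 2)) :=
      Real.log_le_log hposlb (h2.trans h1)
    have hlogeq : Real.log (vB * (C * Real.exp (-(I xstar + δ) / ε ^ 2)))
        = Real.log vB + ((-(N : ℝ) / 2) * Real.log (2 * π * ε ^ 2 * σ ^ 2 * Δt)
            + (-(I xstar + δ) / ε ^ 2)) := by
      rw [Real.log_mul hvBpos.ne' (by positivity), Real.log_mul hC.ne' (Real.exp_pos _).ne',
        Real.log_exp, hCdef, Real.log_rpow hbase]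
    have : g ε ≤ ε ^ 2 * Real.log (∫ x in A, C * Real.exp (-(I x) / ε ^ 2)) := by
      calc g ε = ε ^ 2 * Real.log (vB * (C * Real.exp (-(I xstar + δ) / ε ^ 2))) := by
            rw [hlogeq, hgdef]; field_simp; ring
        _ ≤ _ := mul_le_mul_of_nonneg_left hlog hε2.le
    exact this
  -- tendsto of g
  have hg_tendsto : Tendsto g (nhdsWithin 0 (Set.Ioi 0)) (𝓝 (-(I xstar + δ))) := by
    have t1 : Tendsto (fun ε : ℝ => ε ^ 2 * Real.log vB) (nhdsWithin 0 (Set.Ioi 0)) (𝓝 0) := by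
      have : Continuous fun ε : ℝ => ε ^ 2 * Real.log vB := (continuous_pow 2).mul continuous_const
      have h := (this.tendsto 0).mono_left (nhdsWithin_le_nhds (s := Set.Ioi (0:ℝ)))
      simpa using h
    have tlog : Tendsto (fun ε : ℝ => ε ^ 2 * Real.log ε) (nhdsWithin 0 (Set.Ioi 0)) (𝓝 0) := by
      have h := tendsto_log_mul_rpow_nhdsGT_zero (r := 2) (by norm_num)
      refine h.congr' ?_
      filter_upwards [self_mem_nhdsWithin] with ε (hε : 0 < ε)
      rw [show (2:ℝ) = ((2:ℕ):ℝ) by norm_num, Real.rpow_natCast]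
      ring
    have t2 : Tendsto (fun ε : ℝ =>
        ε ^ 2 * ((-(N : ℝ) / 2) * Real.log (2 * π * ε ^ 2 * σ ^ 2 * Δt)))
        (nhdsWithin 0 (Set.Ioi 0)) (𝓝 0) := by
      have heq : (fun ε : ℝ => (-(N : ℝ) / 2) * (ε ^ 2 * Real.log (2 * π * σ ^ 2 * Δt))
            + (-(N : ℝ)) * (ε ^ 2 * Real.log ε))
          =ᶠ[nhdsWithin 0 (Set.Ioi 0)] (fun ε : ℝ =>
          ε ^ 2 * ((-(N : ℝ) / 2) * Real.log (2 * π * ε ^ 2 * σ ^ 2 * Δt))) := by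
        filter_upwards [self_mem_nhdsWithin] with ε (hε : 0 < ε)
        have : Real.log (2 * π * ε ^ 2 * σ ^ 2 * Δt)
            = Real.log (2 * π * σ ^ 2 * Δt) + 2 * Real.log ε := by
          rw [show 2 * π * ε ^ 2 * σ ^ 2 * Δt = (2 * π * σ ^ 2 * Δt) * ε ^ 2 by ring,
            Real.log_mul (by positivity) (by positivity), Real.log_pow]
          push_cast; ring
        rw [this]; ring
      have hcont0 : Tendsto (fun ε : ℝ => ε ^ 2 * Real.log (2 * π * σ ^ 2 * Δt))
          (nhdsWithin 0 (Set.Ioi 0)) (𝓝 0) := by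
        have : Continuous fun ε : ℝ => ε ^ 2 * Real.log (2 * π * σ ^ 2 * Δt) := (continuous_pow 2).mul continuous_const
        have h := (this.tendsto 0).mono_left (nhdsWithin_le_nhds (s := Set.Ioi (0:ℝ)))
        simpa using h
      have tsum := (hcont0.const_mul (-(N : ℝ) / 2)).add (tlog.const_mul (-(N : ℝ)))
      have tsum0 : Tendsto (fun ε : ℝ => (-(N : ℝ) / 2) * (ε ^ 2 * Real.log (2 * π * σ ^ 2 * Δt))
            + (-(N : ℝ)) * (ε ^ 2 * Real.log ε)) (nhdsWithin 0 (Set.Ioi 0)) (𝓝 0) := by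
        simpa using tsum
      exact Filter.Tendsto.congr' heq tsum0
    have := (t1.add t2).sub_const (I xstar + δ)
    simpa [hgdef, sub_eq_add_neg, add_assoc] using this
  -- conclude via liminf
  by_cases hcob : IsCoboundedUnder (· ≥ ·) (nhdsWithin (0:ℝ) (Set.Ioi 0)) f
  · have hgb : IsBoundedUnder (· ≥ ·) (nhdsWithin (0:ℝ) (Set.Ioi 0)) g :=
      hg_tendsto.isBoundedUnder_ge
    have h := liminf_le_liminf hle hgb hcob
    rw [hg_tendsto.liminf_eq] at h
    linarith
  · have hnb : ¬ BddAbove {a : ℝ | ∀ᶠ n in nhdsWithin (0:ℝ) (Set.Ioi 0), a ≤ f n} := by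
      rintro ⟨b, hb⟩
      exact hcob ⟨b, fun a ha => hb (Filter.eventually_map.1 ha)⟩
    rw [Filter.liminf_eq, Real.sSup_of_not_bddAbove hnb]
    have := hInonneg xstar
    linarith
end

section
/- If B is the set of paths u with u(0) = u₀ that hit the level u₀/2 on [0,T], then inf_{u ∈ B} (1/(2σ²)) ∫₀ᵀ (u')² dt = u₀² / (8 σ² T). -/
open MeasureTheory intervalIntegral

lemma cs_integral (y : ℝ → ℝ) (t : ℝ) (ht : 0 < t)
    (h1 : IntervalIntegrable y volume 0 t)
    (h2 : IntervalIntegrable (fun s => (y s) ^ 2) volume 0 t) :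
    (∫ s in (0:ℝ)..t, y s) ^ 2 ≤ t * ∫ s in (0:ℝ)..t, (y s) ^ 2 := by
  set I := ∫ s in (0:ℝ)..t, y s with hI
  set lam := I / t with hlam
  have key : (0:ℝ) ≤ ∫ s in (0:ℝ)..t, (y s - lam) ^ 2 :=
    intervalIntegral.integral_nonneg ht.le (fun u _ => sq_nonneg _)
  have expand : ∫ s in (0:ℝ)..t, (y s - lam) ^ 2
      = (∫ s in (0:ℝ)..t, (y s) ^ 2) - 2 * lam * I + lam ^ 2 * t := by
    have h3 : ∀ s, (y s - lam) ^ 2 = ((y s) ^ 2 - (2 * lam) * y s) + lam ^ 2 := by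
      intro s; ring
    simp_rw [h3]
    rw [intervalIntegral.integral_add (h2.sub (h1.const_mul _)) intervalIntegrable_const,
        intervalIntegral.integral_sub h2 (h1.const_mul _),
        intervalIntegral.integral_const_mul, intervalIntegral.integral_const]
    simp [← hI]
    ring
  rw [expand] at key
  have hc : lam * t = I := div_mul_cancel₀ I ht.ne'
  nlinarith [mul_nonneg ht.le key, hc, sq_nonneg (lam * t - I)]

/-- The infimum of the action `(1/(2σ²)) ∫₀ᵀ (u')² dt` over Cameron–Martin paths starting
at `u₀ > 0` that hit the level `u₀/2` on `[0,T]` equals `u₀²/(8σ²T)`. -/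
theorem subsonic_inflow_action_infimum
    (T σ u₀ : ℝ) (hT : 0 < T) (hσ : 0 < σ) (hu₀ : 0 < u₀) :
    sInf {r : ℝ |
        ∃ y : ℝ → ℝ, IntegrableOn y (Set.Icc 0 T) ∧
          IntegrableOn (fun t => (y t) ^ 2) (Set.Icc 0 T) ∧
          (∃ t ∈ Set.Icc (0:ℝ) T, u₀ + (∫ s in (0:ℝ)..t, y s) ≤ u₀ / 2) ∧
          r = (1 / (2 * σ ^ 2)) * ∫ t in (0:ℝ)..T, (y t) ^ 2}
      = u₀ ^ 2 / (8 * σ ^ 2 * T) := by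
  have hmem : u₀ ^ 2 / (8 * σ ^ 2 * T) ∈ {r : ℝ |
        ∃ y : ℝ → ℝ, IntegrableOn y (Set.Icc 0 T) ∧
          IntegrableOn (fun t => (y t) ^ 2) (Set.Icc 0 T) ∧
          (∃ t ∈ Set.Icc (0:ℝ) T, u₀ + (∫ s in (0:ℝ)..t, y s) ≤ u₀ / 2) ∧
          r = (1 / (2 * σ ^ 2)) * ∫ t in (0:ℝ)..T, (y t) ^ 2} := by
    refine ⟨fun _ => -u₀ / (2 * T), ?_, ?_, ?_, ?_⟩
    · exact integrableOn_const measure_Icc_lt_top.ne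
    · exact integrableOn_const measure_Icc_lt_top.ne
    · refine ⟨T, Set.right_mem_Icc.2 hT.le, ?_⟩
      rw [intervalIntegral.integral_const]
      simp only [sub_zero, smul_eq_mul]
      have : T * (-u₀ / (2 * T)) = -(u₀ / 2) := by field_simp
      rw [this]; linarith
    · rw [intervalIntegral.integral_const]
      simp only [sub_zero, smul_eq_mul]
      field_simp
      ring
  have hlb : ∀ r ∈ {r : ℝ |
        ∃ y : ℝ → ℝ, IntegrableOn y (Set.Icc 0 T) ∧
          IntegrableOn (fun t => (y t) ^ 2) (Set.Icc 0 T) ∧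
          (∃ t ∈ Set.Icc (0:ℝ) T, u₀ + (∫ s in (0:ℝ)..t, y s) ≤ u₀ / 2) ∧
          r = (1 / (2 * σ ^ 2)) * ∫ t in (0:ℝ)..T, (y t) ^ 2},
      u₀ ^ 2 / (8 * σ ^ 2 * T) ≤ r := by
    rintro r ⟨y, hy1, hy2, ⟨t, ⟨ht0, htT⟩, hhit⟩, hr⟩
    have ht0' : 0 < t := by
      rcases lt_or_eq_of_le ht0 with h | h
      · exact h
      · exfalso
        rw [← h] at hhit
        simp at hhit
        linarith
    have hI1t : IntervalIntegrable y volume 0 t := by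
      apply IntegrableOn.intervalIntegrable
      rw [Set.uIcc_of_le ht0]
      exact hy1.mono_set (Set.Icc_subset_Icc le_rfl htT)
    have hI2t : IntervalIntegrable (fun s => (y s) ^ 2) volume 0 t := by
      apply IntegrableOn.intervalIntegrable
      rw [Set.uIcc_of_le ht0]
      exact hy2.mono_set (Set.Icc_subset_Icc le_rfl htT)
    have hI2T : IntervalIntegrable (fun s => (y s) ^ 2) volume 0 T := by
      apply IntegrableOn.intervalIntegrable
      rw [Set.uIcc_of_le hT.le]
      exact hy2
    set I := ∫ s in (0:ℝ)..t, y s with hIdef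
    have hIle : I ≤ -(u₀ / 2) := by linarith
    have hIsq : (u₀ / 2) ^ 2 ≤ I ^ 2 := by nlinarith
    have hcs := cs_integral y t ht0' hI1t hI2t
    have hmono : (∫ s in (0:ℝ)..t, (y s) ^ 2) ≤ ∫ s in (0:ℝ)..T, (y s) ^ 2 :=
      intervalIntegral.integral_mono_interval le_rfl ht0 htT
        (Filter.Eventually.of_forall fun s => sq_nonneg _) hI2T
    have hint_nonneg : 0 ≤ ∫ s in (0:ℝ)..t, (y s) ^ 2 :=
      intervalIntegral.integral_nonneg ht0 (fun u _ => sq_nonneg _)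
    have h1 : (u₀ / 2) ^ 2 ≤ T * ∫ s in (0:ℝ)..T, (y s) ^ 2 := by
      calc (u₀ / 2) ^ 2 ≤ I ^ 2 := hIsq
        _ ≤ t * ∫ s in (0:ℝ)..t, (y s) ^ 2 := hcs
        _ ≤ T * ∫ s in (0:ℝ)..t, (y s) ^ 2 := by nlinarith
        _ ≤ T * ∫ s in (0:ℝ)..T, (y s) ^ 2 := by nlinarith
    rw [hr]
    rw [div_le_iff₀ (by positivity)]
    calc u₀ ^ 2 = ((u₀ / 2) ^ 2 / T) * (4 * T) := by
          rw [show ((u₀ / 2) ^ 2 / T) * (4 * T) = ((u₀ / 2) ^ 2 / T * T) * 4 by ring,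
            div_mul_cancel₀ _ hT.ne']; ring
      _ ≤ (∫ s in (0:ℝ)..T, (y s) ^ 2) * (4 * T) := by
          have hTpos : (0:ℝ) < 4 * T := by positivity
          apply mul_le_mul_of_nonneg_right _ hTpos.le
          rw [div_le_iff₀ hT]
          linarith
      _ = 1 / (2 * σ ^ 2) * (∫ s in (0:ℝ)..T, (y s) ^ 2) * (8 * σ ^ 2 * T) := by
          field_simp; ring
  exact le_antisymm (csInf_le ⟨_, hlb⟩ hmem) (le_csInf ⟨_, hmem⟩ hlb)
end
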